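/- If w is a permutation in S_n, j satisfies 1 ≤ j ≤ n-2, and w(j+2) lies strictly between w(j) and w(j+1), then w and the permutation w' obtained from w by swapping the values in positions j and j+1 have the same Robinson–Schensted insertion tableau (left tableau). -/

import Mathlib

/-- The symmetric group `S_n`, realized as permutations of `ℤ` fixing everything
outside `{1, …, n}`. -/
def Sgrp (n : ℕ) : Set (Equiv.Perm ℤ) :=
  {w | ∀ i : ℤ, (i < 1 ∨ (n : ℤ) < i) → w i = i}

/-- The simple transposition `s_j` swapping `j` and `j+1`. -/
def aswap (j : ℕ) : Equiv.Perm ℤ := Equiv.swap (j : ℤ) ((j : ℤ) + 1)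

/-- Coxeter length on `S_n` with respect to the adjacent transpositions
`s_1, …, s_{n-1}`: minimal length of a word in these generators. -/
noncomputable def lenA (n : ℕ) (w : Equiv.Perm ℤ) : ℕ :=
  sInf {k | ∃ l : List (Equiv.Perm ℤ), l.length = k ∧
    (∀ g ∈ l, ∃ j : ℕ, 1 ≤ j ∧ j < n ∧ g = aswap j) ∧ l.prod = w}

/-- Row insertion: insert `x` into a row, returning the new row and the bumped
entry (if any). For distinct entries: `x` replaces the leftmost entry `> x`. -/
def insertRow (x : ℕ) : List ℕ → List ℕ × Option ℕ
  | [] => ([x], none)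
  | y :: ys =>
    if x < y then (x :: ys, some y)
    else (y :: (insertRow x ys).1, (insertRow x ys).2)

/-- Schensted insertion of `x` into a tableau given as its list of rows. -/
def insertTab : List (List ℕ) → ℕ → List (List ℕ)
  | [], x => [[x]]
  | row :: rest, x =>
    match insertRow x row with
    | (r, none) => r :: rest
    | (r, some y) => r :: insertTab rest y

/-- The Robinson–Schensted insertion (left) tableau `P(w)` of a word. -/
def Ptab (l : List ℕ) : List (List ℕ) := l.foldl insertTab []

/-- One-line notation `(w(1), …, w(n))` of a permutation in `S_n`. -/
def oneLine (n : ℕ) (w : Equiv.Perm ℤ) : List ℕ :=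
  (List.range' 1 n).map (fun j => (w (j : ℤ)).toNat)


lemma insertRow_nil (x : ℕ) : insertRow x [] = ([x], none) := rfl

lemma insertRow_lt {x y : ℕ} (h : x < y) (ys : List ℕ) :
    insertRow x (y :: ys) = (x :: ys, some y) := by
  simp [insertRow, h]

lemma insertRow_append {x : ℕ} {L : List ℕ} (hL : ∀ a ∈ L, a < x) (M : List ℕ) :
    insertRow x (L ++ M) = (L ++ (insertRow x M).1, (insertRow x M).2) := by
  induction L with
  | nil => simp
  | cons a L ih =>
    have ha : ¬ x < a := not_lt.2 (le_of_lt (hL a (by simp)))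
    simp only [List.cons_append, insertRow, if_neg ha]
    rw [ih (fun b hb => hL b (by simp [hb]))]

lemma ir_none {x : ℕ} {L : List ℕ} (hL : ∀ a ∈ L, a < x) :
    insertRow x L = (L ++ [x], none) := by
  have := insertRow_append hL []
  simpa [insertRow_nil] using this

lemma ir_some {x m : ℕ} {L S : List ℕ} (hL : ∀ a ∈ L, a < x) (hm : x < m) :
    insertRow x (L ++ m :: S) = (L ++ x :: S, some m) := by
  rw [insertRow_append hL, insertRow_lt hm]

lemma it_none {x : ℕ} {R r : List ℕ} (rest : List (List ℕ))
    (h : insertRow x R = (r, none)) : insertTab (R :: rest) x = r :: rest := by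
  simp [insertTab, h]

lemma it_some {x m : ℕ} {R r : List ℕ} (rest : List (List ℕ))
    (h : insertRow x R = (r, some m)) :
    insertTab (R :: rest) x = r :: insertTab rest m := by
  simp [insertTab, h]

lemma insertRow_perm (x : ℕ) (R : List ℕ) :
    ((insertRow x R).1 ++ (insertRow x R).2.toList).Perm (x :: R) := by
  induction R with
  | nil => simp [insertRow]
  | cons y ys ih =>
    by_cases h : x < y
    · simp only [insertRow_lt h]
      simp only [Option.toList_some]
      exact (List.perm_append_singleton y (x :: ys)).trans (List.Perm.swap x y ys)
    · simp only [insertRow, if_neg h]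
      have h1 : (y :: (insertRow x ys).1 ++ (insertRow x ys).2.toList).Perm
          (y :: (x :: ys)) := by simpa using (ih.cons y)
      exact h1.trans (List.Perm.swap x y ys)

lemma insertRow_fst_subset {x : ℕ} {R : List ℕ} {a : ℕ}
    (h : a ∈ (insertRow x R).1) : a ∈ x :: R :=
  (insertRow_perm x R).subset (by simp [h])

lemma insertRow_snd_mem {x m : ℕ} {R : List ℕ}
    (h : (insertRow x R).2 = some m) : m ∈ x :: R := by
  refine (insertRow_perm x R).subset ?_
  simp [h]

lemma insertRow_sorted {x : ℕ} : ∀ {R : List ℕ}, R.Pairwise (· < ·) → x ∉ R →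
    (insertRow x R).1.Pairwise (· < ·) := by
  intro R
  induction R with
  | nil => intro _ _; simp [insertRow]
  | cons y ys ih =>
    intro hR hx
    rcases List.pairwise_cons.mp hR with ⟨hy, hys⟩
    by_cases h : x < y
    · rw [insertRow_lt h]
      exact List.pairwise_cons.mpr ⟨fun b hb => h.trans (hy b hb), hys⟩
    · have hxy : y < x := lt_of_le_of_ne (not_lt.mp h) (by intro e; exact hx (by simp [e]))
      simp only [insertRow, if_neg h]
      refine List.pairwise_cons.mpr ⟨?_, ih hys (fun hm => hx (by simp [hm]))⟩
      intro b hb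
      rcases List.mem_cons.mp (insertRow_fst_subset hb) with hb | hb
      · exact hb ▸ hxy
      · exact hy b hb

lemma insertTab_flatten_perm : ∀ (T : List (List ℕ)) (x : ℕ),
    (insertTab T x).flatten.Perm (x :: T.flatten) := by
  intro T
  induction T with
  | nil => intro x; simp [insertTab]
  | cons R rest ih =>
    intro x
    have hperm := insertRow_perm x R
    rcases ho : (insertRow x R).2 with _ | m
    · have : insertTab (R :: rest) x = (insertRow x R).1 :: rest :=
        it_none rest (by rw [← ho])
      rw [this]
      simp only [List.flatten_cons]
      rw [ho] at hperm; simp at hperm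
      simpa using hperm.append_right rest.flatten
    · have : insertTab (R :: rest) x = (insertRow x R).1 :: insertTab rest m :=
        it_some rest (by rw [← ho])
      rw [this]
      simp only [List.flatten_cons]
      rw [ho] at hperm
      have h1 : ((insertRow x R).1 ++ (insertTab rest m).flatten).Perm
            ((insertRow x R).1 ++ (m :: rest.flatten)) := ((ih m).append_left _)
      have h2 : ((insertRow x R).1 ++ (m :: rest.flatten)).Perm
            (((insertRow x R).1 ++ [m]) ++ rest.flatten) := by
        simp
      have h3 : (((insertRow x R).1 ++ [m]) ++ rest.flatten).Perm
            ((x :: R) ++ rest.flatten) := by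
        exact (by simpa using hperm : ((insertRow x R).1 ++ [m]).Perm (x :: R)).append_right _
      simpa using (h1.trans h2).trans h3

lemma insertTab_sorted : ∀ (T : List (List ℕ)) (x : ℕ),
    (∀ R ∈ T, R.Pairwise (· < ·)) → T.flatten.Nodup → x ∉ T.flatten →
    ∀ R ∈ insertTab T x, R.Pairwise (· < ·) := by
  intro T
  induction T with
  | nil => intro x _ _ _ R hR; simp [insertTab] at hR; simp [hR]
  | cons Q rest ih =>
    intro x hrows hnd hx
    have hQ : Q.Pairwise (· < ·) := hrows Q (by simp)
    have hxQ : x ∉ Q := fun h => hx (by simp [h])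
    have hsorted1 : (insertRow x Q).1.Pairwise (· < ·) := insertRow_sorted hQ hxQ
    simp only [List.flatten_cons] at hnd hx
    rcases ho : (insertRow x Q).2 with _ | m
    · rw [it_none rest (by rw [← ho])]
      intro R hR
      rcases List.mem_cons.mp hR with rfl | hR
      · exact hsorted1
      · exact hrows R (by simp [hR])
    · rw [it_some rest (by rw [← ho])]
      intro R hR
      rcases List.mem_cons.mp hR with rfl | hR
      · exact hsorted1
      · refine ih m (fun S hS => hrows S (by simp [hS])) (hnd.of_append_right) ?_ R hR
        have hm : m ∈ x :: Q := insertRow_snd_mem ho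
        rcases List.mem_cons.mp hm with rfl | hm
        · exact fun h => hx (by simp [h])
        · exact fun h => (List.disjoint_of_nodup_append hnd) hm h

lemma it_eval_some (x m : ℕ) (L S row : List ℕ) (rest : List (List ℕ))
    (hrow : row = L ++ m :: S) (hL : ∀ a ∈ L, a < x) (hm : x < m) :
    insertTab (row :: rest) x = (L ++ x :: S) :: insertTab rest m := by
  subst hrow; exact it_some rest (ir_some hL hm)

lemma it_eval_none (x : ℕ) (row : List ℕ) (rest : List (List ℕ))
    (hL : ∀ a ∈ row, a < x) :
    insertTab (row :: rest) x = (row ++ [x]) :: rest :=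
  it_none rest (ir_none hL)

lemma split_at (v : ℕ) : ∀ (R : List ℕ), R.Pairwise (· < ·) → v ∉ R →
    ∃ L M, R = L ++ M ∧ (∀ a ∈ L, a < v) ∧ (∀ a ∈ M, v < a) := by
  intro R
  induction R with
  | nil => intro _ _; exact ⟨[], [], by simp, by simp, by simp⟩
  | cons y ys ih =>
    intro hR hv
    rcases List.pairwise_cons.mp hR with ⟨hy, hys⟩
    by_cases h : y < v
    · obtain ⟨L, M, h1, h2, h3⟩ := ih hys (fun hm => hv (by simp [hm]))
      exact ⟨y :: L, M, by simp [h1], by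
        intro a ha; rcases List.mem_cons.mp ha with rfl | ha
        exacts [h, h2 a ha], h3⟩
    · have hvy : v < y := lt_of_le_of_ne (not_lt.mp h) (fun e => hv (by simp [e]))
      refine ⟨[], y :: ys, by simp, by simp, ?_⟩
      intro a ha
      rcases List.mem_cons.mp ha with rfl | ha
      exacts [hvy, hvy.trans (hy a ha)]

lemma split3 {R : List ℕ} (hR : R.Pairwise (· < ·)) {u v w : ℕ} (huv : u < v)
    (hvw : v < w) (hu : u ∉ R) (hv : v ∉ R) (hw : w ∉ R) :
    ∃ A B C D, R = A ++ B ++ C ++ D ∧ (∀ a ∈ A, a < u) ∧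
      (∀ b ∈ B, u < b ∧ b < v) ∧ (∀ c ∈ C, v < c ∧ c < w) ∧ (∀ d ∈ D, w < d) := by
  obtain ⟨A, M, rfl, hA, hM⟩ := split_at u R hR hu
  have hMsort : M.Pairwise (· < ·) := (List.pairwise_append.mp hR).2.1
  obtain ⟨B, M2, rfl, hB, hM2⟩ := split_at v M hMsort (fun h => hv (by simp [h]))
  have hM2sort : M2.Pairwise (· < ·) := (List.pairwise_append.mp hMsort).2.1
  obtain ⟨C, D, rfl, hC, hD⟩ := split_at w M2 hM2sort (fun h => hw (by simp [h]))
  refine ⟨A, B, C, D, by simp, hA, ?_, ?_, hD⟩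
  · exact fun b hb => ⟨hM b (by simp [hb]), hB b hb⟩
  · exact fun c hc => ⟨hM2 c (by simp [hc]), hC c hc⟩

lemma split_head {B C : List ℕ} (h : (B ++ C).Pairwise (· < ·)) :
    B ++ C = [] ∨ ∃ e F G, B ++ C = e :: (F ++ G) ∧ e ∈ B ++ C ∧
      (∀ f ∈ F, f ∈ B) ∧ (∀ g ∈ G, g ∈ C ∧ e < g) := by
  cases B with
  | nil =>
    cases C with
    | nil => exact Or.inl rfl
    | cons c C' =>
      refine Or.inr ⟨c, [], C', by simp, by simp, by simp, ?_⟩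
      intro g hg
      simp at h
      exact ⟨by simp [hg], (h.1 g hg)⟩
  | cons b B' =>
    refine Or.inr ⟨b, B', C, by simp, by simp, fun f hf => by simp [hf], ?_⟩
    intro g hg
    rw [List.cons_append, List.pairwise_cons] at h
    exact ⟨hg, h.1 g (by simp [hg])⟩

lemma pairwise_mid1 {A B C D : List ℕ} (h : (A ++ B ++ C ++ D).Pairwise (· < ·)) :
    (B ++ C).Pairwise (· < ·) := by
  refine h.sublist ?_
  have h1 : (B ++ C).Sublist ((B ++ C) ++ D) := List.sublist_append_left _ _
  have h2 : ((B ++ C) ++ D).Sublist (A ++ ((B ++ C) ++ D)) := List.sublist_append_right _ _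
  simpa [List.append_assoc] using h1.trans h2

lemma pairwise_mid2 {A B C D : List ℕ} (h : (A ++ B ++ C ++ D).Pairwise (· < ·)) :
    (C ++ D).Pairwise (· < ·) := by
  refine h.sublist ?_
  have h2 : (C ++ D).Sublist ((A ++ B) ++ (C ++ D)) := List.sublist_append_right _ _
  simpa [List.append_assoc] using h2

lemma nodup3 {l : List ℕ} {p q r : ℕ} (hl : l.Nodup) (hp : p ∉ l) (hq : q ∉ l)
    (hr : r ∉ l) (h1 : p ≠ q) (h2 : p ≠ r) (h3 : q ≠ r) :
    (l ++ [p, q, r]).Nodup := by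
  rw [List.nodup_append]
  refine ⟨hl, by simp [h1, h2, h3], ?_⟩
  intro a ha b hb
  simp at hb
  rcases hb with rfl | rfl | rfl
  exacts [fun e => hp (e ▸ ha), fun e => hq (e ▸ ha), fun e => hr (e ▸ ha)]

lemma nodup_parts {R l : List ℕ} {x y z : ℕ} (h : ((R ++ l) ++ [x, y, z]).Nodup) :
    l.Nodup ∧ (∀ a ∈ R, a ∉ l) ∧ x ∉ R ∧ y ∉ R ∧ z ∉ R ∧
      x ∉ l ∧ y ∉ l ∧ z ∉ l := by
  rw [List.nodup_append, List.nodup_append] at h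
  obtain ⟨⟨hR, hl, hdisj⟩, _, hdisj2⟩ := h
  refine ⟨hl, fun a ha hal => hdisj a ha a hal rfl, ?_, ?_, ?_, ?_, ?_, ?_⟩
  · exact fun hx => hdisj2 x (by simp [hx]) x (by simp) rfl
  · exact fun hy => hdisj2 y (by simp [hy]) y (by simp) rfl
  · exact fun hz => hdisj2 z (by simp [hz]) z (by simp) rfl
  · exact fun hx => hdisj2 x (by simp [hx]) x (by simp) rfl
  · exact fun hy => hdisj2 y (by simp [hy]) y (by simp) rfl
  · exact fun hz => hdisj2 z (by simp [hz]) z (by simp) rfl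

def I3 (T : List (List ℕ)) (x y z : ℕ) : List (List ℕ) :=
  insertTab (insertTab (insertTab T x) y) z

lemma key_nil2 {x y z : ℕ} (hxz : x < z) (hzy : z < y) :
    I3 [] x y z = I3 [] y x z := by
  have hxy : x < y := hxz.trans hzy
  simp [I3, insertTab, insertRow, hxz, hzy, hxy, Nat.lt_asymm hxz, Nat.lt_asymm hzy,
    Nat.lt_asymm hxy]

lemma key_nil1 {x y z : ℕ} (hzx : z < x) (hxy : x < y) :
    I3 [] x y z = I3 [] x z y := by
  have hzy : z < y := hzx.trans hxy
  simp [I3, insertTab, insertRow, hzx, hxy, hzy, Nat.lt_asymm hzx, Nat.lt_asymm hxy,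
    Nat.lt_asymm hzy]

set_option maxHeartbeats 1000000 in
lemma key : ∀ (N : ℕ) (T : List (List ℕ)), T.length ≤ N →
    (∀ R ∈ T, R.Pairwise (· < ·)) →
    ∀ x y z : ℕ, (T.flatten ++ [x, y, z]).Nodup →
    ((x < z → z < y → I3 T x y z = I3 T y x z) ∧
     (z < x → x < y → I3 T x y z = I3 T x z y)) := by
  intro N
  induction N with
  | zero =>
    intro T hT _ x y z _
    have hT0 : T = [] := List.length_eq_zero_iff.mp (Nat.le_zero.mp hT)
    subst hT0
    exact ⟨fun h1 h2 => key_nil2 h1 h2, fun h1 h2 => key_nil1 h1 h2⟩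
  | succ N ih =>
    intro T hT hrows x y z hnd
    cases T with
    | nil => exact ⟨fun h1 h2 => key_nil2 h1 h2, fun h1 h2 => key_nil1 h1 h2⟩
    | cons R rest =>
      have hRsort : R.Pairwise (· < ·) := hrows R (by simp)
      have hrest : ∀ S ∈ rest, S.Pairwise (· < ·) := fun S hS => hrows S (by simp [hS])
      have hlen : rest.length ≤ N := by simpa using Nat.le_of_succ_le_succ hT
      have hnd' : ((R ++ rest.flatten) ++ [x, y, z]).Nodup := by simpa using hnd
      obtain ⟨hndl, hdisj, hxR, hyR, hzR, hxl, hyl, hzl⟩ := nodup_parts hnd'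
      constructor
      · -- second kind : x < z < y
        intro hxz hzy
        have hxy : x < y := hxz.trans hzy
        obtain ⟨A, B, C, D, hR, hA, hB, hC, hD⟩ := split3 hRsort hxz hzy hxR hzR hyR
        have hRsort' : (A ++ B ++ C ++ D).Pairwise (· < ·) := hR ▸ hRsort
        rcases split_head (pairwise_mid1 hRsort') with hBC | ⟨e, F, G, hBC, heBC, hF, hG⟩
        · -- B ++ C = []
          obtain ⟨hB0, hC0⟩ := List.append_eq_nil_iff.mp hBC
          subst hB0; subst hC0
          have hRAD : R = A ++ D := by simpa using hR
          cases D with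
          | nil =>
            have hRA : R = A := by simpa using hRAD
            have hAx : ∀ a ∈ R, a < x := by
              intro a ha; rw [hRA] at ha; exact hA a ha
            have hAy : ∀ a ∈ R ++ [x], a < y := by
              intro a ha
              rcases List.mem_append.mp ha with h | h
              · exact (hAx a h).trans hxy
              · simp at h; omega
            have hAz : ∀ a ∈ R ++ x :: [], a < z := by
              intro a ha
              rcases List.mem_append.mp ha with h | h
              · exact (hAx a h).trans hxz
              · simp at h; omega
            simp only [I3]
            rw [it_eval_none x R rest hAx,
                it_eval_none y (R ++ [x]) rest hAy,
                it_eval_some z y (R ++ [x]) [] ((R ++ [x]) ++ [y]) rest rfl hAz hzy,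
                it_eval_none y R rest (fun a ha => (hAx a ha).trans hxy),
                it_eval_some x y R [] (R ++ [y]) rest rfl hAx hxy,
                it_eval_none z (R ++ x :: []) (insertTab rest y) hAz]
          | cons d D' =>
            have hyd : y < d := hD d (by simp)
            cases D' with
            | nil =>
              have hRd : R = A ++ d :: [] := by simpa using hRAD
              have hxd : x < d := hxy.trans hyd
              have hAxy : ∀ a ∈ A ++ x :: [], a < y := by
                intro a ha
                rcases List.mem_append.mp ha with h | h
                · exact (hA a h).trans hxy
                · simp at h; omega
              have hAxz : ∀ a ∈ A ++ x :: [], a < z := by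
                intro a ha
                rcases List.mem_append.mp ha with h | h
                · exact (hA a h).trans hxz
                · simp at h; omega
              simp only [I3]
              rw [it_eval_some x d A [] R rest hRd hA hxd,
                  it_eval_none y (A ++ x :: []) (insertTab rest d) hAxy,
                  it_eval_some z y (A ++ x :: []) [] ((A ++ x :: []) ++ [y])
                    (insertTab rest d) rfl hAxz hzy,
                  it_eval_some y d A [] R rest hRd (fun a ha => (hA a ha).trans hxy) hyd,
                  it_eval_some x y A [] (A ++ y :: []) (insertTab rest d) rfl hA hxy,
                  it_eval_none z (A ++ x :: []) (insertTab (insertTab rest d) y) hAxz]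
            | cons d2 D'' =>
              have hyd2 : y < d2 := hD d2 (by simp)
              have hsortD : (d :: d2 :: D'').Pairwise (· < ·) :=
                (List.pairwise_append.mp (hRAD ▸ hRsort)).2.1
              have hd12 : d < d2 := (List.pairwise_cons.mp hsortD).1 d2 (by simp)
              have hxd : x < d := hxy.trans hyd
              have hzd2 : z < d2 := hzy.trans hyd2
              have hAxy : ∀ a ∈ A ++ x :: [], a < y := by
                intro a ha
                rcases List.mem_append.mp ha with h | h
                · exact (hA a h).trans hxy
                · simp at h; omega
              have hAxz : ∀ a ∈ A ++ x :: [], a < z := by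
                intro a ha
                rcases List.mem_append.mp ha with h | h
                · exact (hA a h).trans hxz
                · simp at h; omega
              have hdR : d ∈ R := by rw [hRAD]; simp
              have hd2R : d2 ∈ R := by rw [hRAD]; simp
              have hIH : I3 rest d d2 y = I3 rest d y d2 :=
                (ih rest hlen hrest d d2 y
                  (nodup3 hndl (hdisj d hdR) (hdisj d2 hd2R) hyl (by omega) (by omega)
                    (by omega))).2 hyd hd12
              simp only [I3]
              rw [it_eval_some x d A (d2 :: D'') R rest hRAD hA hxd,
                  it_eval_some y d2 (A ++ x :: []) D'' (A ++ x :: (d2 :: D''))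
                    (insertTab rest d) (by simp) hAxy hyd2,
                  it_eval_some z y (A ++ x :: []) D'' ((A ++ x :: []) ++ y :: D'')
                    (insertTab (insertTab rest d) d2) rfl hAxz hzy,
                  it_eval_some y d A (d2 :: D'') R rest hRAD
                    (fun a ha => (hA a ha).trans hxy) hyd,
                  it_eval_some x y A (d2 :: D'') (A ++ y :: (d2 :: D''))
                    (insertTab rest d) rfl hA hxy,
                  it_eval_some z d2 (A ++ x :: []) D'' (A ++ x :: (d2 :: D''))
                    (insertTab (insertTab rest d) y) (by simp) hAxz hzd2,
                  show insertTab (insertTab (insertTab rest d) d2) y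
                      = insertTab (insertTab (insertTab rest d) y) d2 from hIH]
        · -- B ++ C = e :: (F ++ G)
          have heR : e ∉ rest.flatten := by
            refine hdisj e ?_
            rw [hR]; simp only [List.mem_append]
            rcases List.mem_append.mp heBC with h | h <;> tauto
          have hxe : x < e := by
            rcases List.mem_append.mp heBC with h | h
            exacts [(hB e h).1, hxz.trans (hC e h).1]
          have hey : e < y := by
            rcases List.mem_append.mp heBC with h | h
            exacts [(hB e h).2.trans hzy, (hC e h).2]
          have hFf : ∀ f ∈ F, x < f ∧ f < z := fun f hf => hB f (hF f hf)
          have hGf : ∀ g ∈ G, z < g ∧ g < y ∧ e < g := fun g hg =>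
            ⟨(hC g (hG g hg).1).1, (hC g (hG g hg).1).2, (hG g hg).2⟩
          have hR2 : R = A ++ e :: (F ++ (G ++ D)) := by
            rw [hR, show A ++ B ++ C ++ D = A ++ ((B ++ C) ++ D) from by simp, hBC]
            simp
          cases D with
          | nil =>
            have hR3 : R = A ++ e :: (F ++ G) := by simpa using hR2
            obtain ⟨w, right, hwr, hzw⟩ : ∃ w right, G ++ [y] = w :: right ∧ z < w := by
              cases G with
              | nil => exact ⟨y, [], by simp, hzy⟩
              | cons g G' => exact ⟨g, G' ++ [y], by simp, (hGf g (by simp)).1⟩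
            have hL3 : ∀ a ∈ A ++ x :: F, a < z := by
              intro a ha
              simp only [List.mem_append, List.mem_cons] at ha
              rcases ha with h | rfl | h
              · exact (hA a h).trans hxz
              · exact hxz
              · exact (hFf a h).2
            have hL1y : ∀ a ∈ A ++ x :: (F ++ G), a < y := by
              intro a ha
              simp only [List.mem_append, List.mem_cons] at ha
              rcases ha with h | rfl | h | h
              · exact (hA a h).trans hxy
              · exact hxy
              · exact (hFf a h).2.trans hzy
              · exact (hGf a h).2.1
            have hLy : ∀ a ∈ R, a < y := by
              intro a ha
              rw [hR3] at ha
              simp only [List.mem_append, List.mem_cons] at ha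
              rcases ha with h | rfl | h | h
              · exact (hA a h).trans hxy
              · exact hey
              · exact (hFf a h).2.trans hzy
              · exact (hGf a h).2.1
            simp only [I3]
            rw [it_eval_some x e A (F ++ G) R rest hR3 hA hxe,
                it_eval_none y (A ++ x :: (F ++ G)) (insertTab rest e) hL1y,
                it_eval_some z w (A ++ x :: F) right ((A ++ x :: (F ++ G)) ++ [y])
                  (insertTab rest e) (by rw [← hwr]; simp) hL3 hzw,
                it_eval_none y R rest hLy,
                it_eval_some x e A (F ++ (G ++ [y])) (R ++ [y]) rest
                  (by rw [hR3]; simp) hA hxe,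
                it_eval_some z w (A ++ x :: F) right (A ++ x :: (F ++ (G ++ [y])))
                  (insertTab rest e) (by rw [← hwr]; simp) hL3 hzw]
          | cons d D' =>
            have hyd : y < d := hD d (by simp)
            have hdR : d ∈ R := by rw [hR2]; simp
            obtain ⟨w, right, hwr, hzw, hew, hwd, hwl⟩ :
                ∃ w right, G ++ (y :: D') = w :: right ∧ z < w ∧ e < w ∧ w < d ∧
                  w ∉ rest.flatten := by
              cases G with
              | nil => exact ⟨y, D', by simp, hzy, hey, hyd, hyl⟩
              | cons g G' =>
                exact ⟨g, G' ++ (y :: D'), by simp, (hGf g (by simp)).1,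
                  (hGf g (by simp)).2.2, ((hGf g (by simp)).2.1).trans hyd,
                  hdisj g (by rw [hR2]; simp)⟩
            have hIH : I3 rest e d w = I3 rest d e w :=
              (ih rest hlen hrest e d w
                (nodup3 hndl heR (hdisj d hdR) hwl (by omega) (by omega) (by omega))).1
                hew hwd
            have hL3 : ∀ a ∈ A ++ x :: F, a < z := by
              intro a ha
              simp only [List.mem_append, List.mem_cons] at ha
              rcases ha with h | rfl | h
              · exact (hA a h).trans hxz
              · exact hxz
              · exact (hFf a h).2
            have hL1y : ∀ a ∈ A ++ x :: (F ++ G), a < y := by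
              intro a ha
              simp only [List.mem_append, List.mem_cons] at ha
              rcases ha with h | rfl | h | h
              · exact (hA a h).trans hxy
              · exact hxy
              · exact (hFf a h).2.trans hzy
              · exact (hGf a h).2.1
            have hRyL : ∀ a ∈ A ++ e :: (F ++ G), a < y := by
              intro a ha
              simp only [List.mem_append, List.mem_cons] at ha
              rcases ha with h | rfl | h | h
              · exact (hA a h).trans hxy
              · exact hey
              · exact (hFf a h).2.trans hzy
              · exact (hGf a h).2.1
            simp only [I3]
            rw [it_eval_some x e A (F ++ (G ++ (d :: D'))) R rest hR2 hA hxe,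
                it_eval_some y d (A ++ x :: (F ++ G)) D'
                  (A ++ x :: (F ++ (G ++ (d :: D')))) (insertTab rest e)
                  (by simp) hL1y hyd,
                it_eval_some z w (A ++ x :: F) right
                  ((A ++ x :: (F ++ G)) ++ y :: D')
                  (insertTab (insertTab rest e) d) (by rw [← hwr]; simp) hL3 hzw,
                it_eval_some y d (A ++ e :: (F ++ G)) D' R rest
                  (by rw [hR2]; simp) hRyL hyd,
                it_eval_some x e A (F ++ (G ++ (y :: D')))
                  ((A ++ e :: (F ++ G)) ++ y :: D') (insertTab rest d)
                  (by simp) hA hxe,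
                it_eval_some z w (A ++ x :: F) right
                  (A ++ x :: (F ++ (G ++ (y :: D'))))
                  (insertTab (insertTab rest d) e) (by rw [← hwr]; simp) hL3 hzw,
                show insertTab (insertTab (insertTab rest e) d) w
                    = insertTab (insertTab (insertTab rest d) e) w from hIH]
      · -- first kind : z < x < y
        intro hzx hxy
        have hzy : z < y := hzx.trans hxy
        obtain ⟨A, B, C, D, hR, hA, hB, hC, hD⟩ := split3 hRsort hzx hxy hzR hxR hyR
        have hRsort' : (A ++ B ++ C ++ D).Pairwise (· < ·) := hR ▸ hRsort
        -- decomposition of B ++ [x]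
        obtain ⟨u, right2, hur, hzu, hux, huM⟩ :
            ∃ u right2, B ++ [x] = u :: right2 ∧ z < u ∧ u ≤ x ∧ (u = x ∨ u ∈ B) := by
          cases B with
          | nil => exact ⟨x, [], by simp, hzx, le_refl x, Or.inl rfl⟩
          | cons b B' =>
            exact ⟨b, B' ++ [x], by simp, (hB b (by simp)).1,
              le_of_lt (hB b (by simp)).2, Or.inr (by simp)⟩
        have hul : u ∉ rest.flatten := by
          rcases huM with rfl | h
          · exact hxl
          · exact hdisj u (by rw [hR]; simp only [List.mem_append]; tauto)
        have hr2y : ∀ a ∈ right2, a < y := by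
          intro a ha
          have : a ∈ B ++ [x] := by rw [hur]; simp [ha]
          rcases List.mem_append.mp this with h | h
          · exact (hB a h).2.trans hxy
          · simp at h; omega
        rcases split_head (pairwise_mid2 hRsort') with hCD | ⟨hh, P, Q, hCD, hhCD, hP, hQ⟩
        · -- C ++ D = []
          obtain ⟨hC0, hD0⟩ := List.append_eq_nil_iff.mp hCD
          subst hC0; subst hD0
          have hRAB : R = A ++ B := by simpa using hR
          have hLx : ∀ a ∈ R, a < x := by
            intro a ha
            rw [hRAB] at ha
            rcases List.mem_append.mp ha with h | h
            · exact (hA a h).trans hzx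
            · exact (hB a h).2
          have hLy : ∀ a ∈ R ++ [x], a < y := by
            intro a ha
            rcases List.mem_append.mp ha with h | h
            · exact (hLx a h).trans hxy
            · simp at h; omega
          have hy' : ∀ a ∈ A ++ z :: right2, a < y := by
            intro a ha
            simp only [List.mem_append, List.mem_cons] at ha
            rcases ha with h | rfl | h
            · exact (hA a h).trans hzy
            · exact hzy
            · exact hr2y a h
          simp only [I3]
          rw [it_eval_none x R rest hLx,
              it_eval_none y (R ++ [x]) rest hLy,
              it_eval_some z u A (right2 ++ [y]) ((R ++ [x]) ++ [y]) rest
                (by rw [hRAB, show A ++ u :: (right2 ++ [y]) = A ++ (u :: right2) ++ [y]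
                      from by simp, ← hur]; simp) hA hzu,
              it_eval_some z u A right2 (R ++ [x]) rest
                (by rw [hRAB, ← hur]; simp) hA hzu,
              it_eval_none y (A ++ z :: right2) (insertTab rest u) hy']
          simp
        · have hhl : hh ∉ rest.flatten := by
            refine hdisj hh ?_
            rw [hR]; simp only [List.mem_append]
            rcases List.mem_append.mp hhCD with h | h <;> tauto
          have hxh : x < hh := by
            rcases List.mem_append.mp hhCD with h | h
            exacts [(hC hh h).1, hxy.trans (hD hh h)]
          have huh : u < hh := lt_of_le_of_lt hux hxh
          have hPf : ∀ p ∈ P, x < p ∧ p < y := fun p hp => hC p (hP p hp)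
          have hQf : ∀ q ∈ Q, y < q ∧ hh < q := fun q hq => ⟨hD q (hQ q hq).1, (hQ q hq).2⟩
          have hR2 : R = (A ++ B) ++ hh :: (P ++ Q) := by
            rw [hR, show A ++ B ++ C ++ D = (A ++ B) ++ (C ++ D) from by simp, hCD]
          cases Q with
          | nil =>
            have hR3 : R = (A ++ B) ++ hh :: P := by simpa using hR2
            have hLABx : ∀ a ∈ A ++ B, a < x := by
              intro a ha
              rcases List.mem_append.mp ha with h | h
              · exact (hA a h).trans hzx
              · exact (hB a h).2
            have hrow1y : ∀ a ∈ (A ++ B) ++ x :: P, a < y := by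
              intro a ha
              simp only [List.mem_append, List.mem_cons] at ha
              rcases ha with (h | h) | rfl | h
              · exact (hA a h).trans hzy
              · exact (hB a h).2.trans hxy
              · exact hxy
              · exact (hPf a h).2
            have hy' : ∀ a ∈ A ++ z :: (right2 ++ P), a < y := by
              intro a ha
              simp only [List.mem_append, List.mem_cons] at ha
              rcases ha with h | rfl | h | h
              · exact (hA a h).trans hzy
              · exact hzy
              · exact hr2y a h
              · exact (hPf a h).2
            simp only [I3]
            rw [it_eval_some x hh (A ++ B) P R rest hR3 hLABx hxh,
                it_eval_none y ((A ++ B) ++ x :: P) (insertTab rest hh) hrow1y,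
                it_eval_some z u A (right2 ++ (P ++ [y])) (((A ++ B) ++ x :: P) ++ [y])
                  (insertTab rest hh)
                  (by rw [show A ++ u :: (right2 ++ (P ++ [y]))
                        = A ++ (u :: right2) ++ (P ++ [y]) from by simp, ← hur]; simp)
                  hA hzu,
                it_eval_some z u A (right2 ++ P) ((A ++ B) ++ x :: P) (insertTab rest hh)
                  (by rw [show A ++ u :: (right2 ++ P) = A ++ (u :: right2) ++ P
                        from by simp, ← hur]; simp) hA hzu,
                it_eval_none y (A ++ z :: (right2 ++ P)) (insertTab (insertTab rest hh) u)
                  hy']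
            simp
          | cons q Q' =>
            have hyq : y < q := (hQf q (by simp)).1
            have hhq : hh < q := (hQf q (by simp)).2
            have hqR : q ∈ R := by rw [hR2]; simp
            have hIH : I3 rest hh q u = I3 rest hh u q :=
              (ih rest hlen hrest hh q u
                (nodup3 hndl hhl (hdisj q hqR) hul (by omega) (by omega) (by omega))).2
                huh hhq
            have hLABx : ∀ a ∈ A ++ B, a < x := by
              intro a ha
              rcases List.mem_append.mp ha with h | h
              · exact (hA a h).trans hzx
              · exact (hB a h).2
            have hrow1y : ∀ a ∈ (A ++ B) ++ x :: P, a < y := by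
              intro a ha
              simp only [List.mem_append, List.mem_cons] at ha
              rcases ha with (h | h) | rfl | h
              · exact (hA a h).trans hzy
              · exact (hB a h).2.trans hxy
              · exact hxy
              · exact (hPf a h).2
            have hy2 : ∀ a ∈ A ++ z :: (right2 ++ P), a < y := by
              intro a ha
              simp only [List.mem_append, List.mem_cons] at ha
              rcases ha with h | rfl | h | h
              · exact (hA a h).trans hzy
              · exact hzy
              · exact hr2y a h
              · exact (hPf a h).2
            simp only [I3]
            rw [it_eval_some x hh (A ++ B) (P ++ (q :: Q')) R rest hR2 hLABx hxh,
                it_eval_some y q ((A ++ B) ++ x :: P) Q'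
                  ((A ++ B) ++ x :: (P ++ (q :: Q'))) (insertTab rest hh)
                  (by simp) hrow1y hyq,
                it_eval_some z u A (right2 ++ (P ++ y :: Q'))
                  (((A ++ B) ++ x :: P) ++ y :: Q')
                  (insertTab (insertTab rest hh) q)
                  (by rw [show A ++ u :: (right2 ++ (P ++ y :: Q'))
                        = A ++ (u :: right2) ++ (P ++ y :: Q') from by simp, ← hur]; simp)
                  hA hzu,
                it_eval_some z u A (right2 ++ (P ++ q :: Q'))
                  ((A ++ B) ++ x :: (P ++ (q :: Q'))) (insertTab rest hh)
                  (by rw [show A ++ u :: (right2 ++ (P ++ q :: Q'))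
                        = A ++ (u :: right2) ++ (P ++ q :: Q') from by simp, ← hur]; simp)
                  hA hzu,
                it_eval_some y q (A ++ z :: (right2 ++ P)) Q'
                  (A ++ z :: (right2 ++ (P ++ q :: Q')))
                  (insertTab (insertTab rest hh) u) (by simp) hy2 hyq,
                show insertTab (insertTab (insertTab rest hh) q) u
                    = insertTab (insertTab (insertTab rest hh) u) q from hIH]
            simp

lemma foldl_inv : ∀ (l : List ℕ) (T : List (List ℕ)),
    (∀ R ∈ T, R.Pairwise (· < ·)) → (T.flatten ++ l).Nodup →
    (∀ R ∈ l.foldl insertTab T, R.Pairwise (· < ·)) ∧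
      (l.foldl insertTab T).flatten.Perm (T.flatten ++ l) := by
  intro l
  induction l with
  | nil =>
    intro T h _
    exact ⟨by simpa using h, by simp⟩
  | cons x l' ih =>
    intro T hrows hnd
    have hndT : T.flatten.Nodup := hnd.of_append_left
    have hxT : x ∉ T.flatten := fun h =>
      (List.disjoint_of_nodup_append hnd) h (by simp)
    have hperm := insertTab_flatten_perm T x
    have hstep : (T.flatten ++ x :: l').Perm ((insertTab T x).flatten ++ l') := by
      refine List.perm_middle.trans ?_
      exact (hperm.symm.append_right l')
    obtain ⟨h1, h2⟩ := ih (insertTab T x) (insertTab_sorted T x hrows hndT hxT)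
      (hstep.nodup hnd)
    refine ⟨by simpa using h1, ?_⟩
    simp only [List.foldl_cons]
    exact h2.trans ((hperm.append_right l').trans List.perm_middle.symm)


lemma flatmap_sing (l : List ℕ) (f : ℕ → ℤ) : (l.flatMap fun a => [f a]) = l.map f := by
  induction l <;> simp_all

lemma oneLine_eq (n : ℕ) (w : Equiv.Perm ℤ) :
    oneLine n w = (List.range' 1 n).map (fun i : ℕ => (w (i : ℤ)).toNat) := by
  rw [oneLine]
  show List.map _ ((List.range' 1 n).flatMap fun a => [((a : ℕ) : ℤ)]) = _
  rw [flatmap_sing, List.map_map]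
  rfl


/-- Knuth relation of the second kind: if `1 ≤ j ≤ n-2` and `w(j+2)` lies strictly
between `w(j)` and `w(j+1)`, then swapping the values in positions `j` and `j+1`
preserves the Robinson–Schensted insertion tableau. -/
theorem knuth_second_kind (n : ℕ) (w : Equiv.Perm ℤ) (hw : w ∈ Sgrp n)
    (j : ℕ) (hj1 : 1 ≤ j) (hj2 : j + 2 ≤ n)
    (hbetween : (w (j : ℤ) < w ((j : ℤ) + 2) ∧ w ((j : ℤ) + 2) < w ((j : ℤ) + 1)) ∨
      (w ((j : ℤ) + 1) < w ((j : ℤ) + 2) ∧ w ((j : ℤ) + 2) < w (j : ℤ))) :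
    Ptab (oneLine n (w * aswap j)) = Ptab (oneLine n w) := by
  have hwrange : ∀ i : ℤ, 1 ≤ i → i ≤ (n : ℤ) → 1 ≤ w i ∧ w i ≤ (n : ℤ) := by
    intro i h1 h2
    by_contra hcon
    have hout : w i < 1 ∨ (n : ℤ) < w i := by omega
    have h3 : w (w i) = w i := hw (w i) hout
    have h4 : w i = i := w.injective h3
    omega
  have hjn : ((j : ℤ)) + 2 ≤ (n : ℤ) := by exact_mod_cast hj2
  have hj1' : (1 : ℤ) ≤ (j : ℤ) := by exact_mod_cast hj1
  have hwa := hwrange (j : ℤ) hj1' (by omega)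
  have hwb := hwrange ((j : ℤ) + 1) (by omega) (by omega)
  have hwc := hwrange ((j : ℤ) + 2) (by omega) (by omega)
  set m0 : ℕ := n - (j + 2) with hm0
  set f : ℕ → ℕ := fun i => (w (i : ℤ)).toNat with hfdef
  set Pl : List ℕ := (List.range' 1 (j - 1)).map f with hPl
  set Sl : List ℕ := (List.range' (j + 3) m0).map f with hSl
  have e1 : List.range' 1 n = List.range' 1 (j - 1) ++ (List.range' j 3 ++ List.range' (j + 3) m0) := by
    have A2 := List.range'_append (s := j) (m := 3) (n := m0) (step := 1)
    have A1 := List.range'_append (s := 1) (m := j - 1) (n := m0 + 3) (step := 1)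
    simp only [one_mul] at A1 A2
    rw [show 1 + (j - 1) = j from by omega] at A1
    rw [show j - 1 + (m0 + 3) = n from by omega, show m0 + 3 = 3 + m0 from by omega] at A1
    rw [show j + 3 = j + 1 * 3 from by ring] at A2
    rw [← A1, ← A2]
  have hr3 : List.range' j 3 = [j, j + 1, j + 2] := rfl
  have c1 : ((j + 1 : ℕ) : ℤ) = (j : ℤ) + 1 := by push_cast; ring
  have c2 : ((j + 2 : ℕ) : ℤ) = (j : ℤ) + 2 := by push_cast; ring
  have hone : oneLine n w =
      Pl ++ ([(w (j : ℤ)).toNat, (w ((j : ℤ) + 1)).toNat, (w ((j : ℤ) + 2)).toNat] ++ Sl) := by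
    rw [oneLine_eq, e1, hr3]
    simp only [List.map_append, List.map_cons, List.map_nil, hPl, hSl, hfdef, c1, c2]
  have hone' : oneLine n (w * aswap j) =
      Pl ++ ([(w ((j : ℤ) + 1)).toNat, (w (j : ℤ)).toNat, (w ((j : ℤ) + 2)).toNat] ++ Sl) := by
    rw [oneLine_eq, e1, hr3]
    simp only [List.map_append, List.map_cons, List.map_nil]
    congr 1
    · refine List.map_congr_left ?_
      intro i hi
      rw [List.mem_range'_1] at hi
      have hij : (i : ℤ) < (j : ℤ) := by
        have : i < j := by omega
        exact_mod_cast this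
      have haw : (aswap j) (i : ℤ) = (i : ℤ) := by
        rw [aswap]
        exact Equiv.swap_apply_of_ne_of_ne (by omega) (by omega)
      simp [hfdef, Equiv.Perm.mul_apply, haw]
    · congr 1
      · simp only [Equiv.Perm.mul_apply, aswap, c1, c2]
        rw [Equiv.swap_apply_left, Equiv.swap_apply_right]
        have : (Equiv.swap ((j : ℤ)) ((j : ℤ) + 1)) ((j : ℤ) + 2) = (j : ℤ) + 2 :=
          Equiv.swap_apply_of_ne_of_ne (by omega) (by omega)
        rw [this]
      · refine List.map_congr_left ?_
        intro i hi
        rw [List.mem_range'_1] at hi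
        have hij : (j : ℤ) + 2 < (i : ℤ) := by
          have : j + 2 < i := by omega
          exact_mod_cast this
        have haw : (aswap j) (i : ℤ) = (i : ℤ) := by
          rw [aswap]
          exact Equiv.swap_apply_of_ne_of_ne (by omega) (by omega)
        simp [hfdef, Equiv.Perm.mul_apply, haw]
  -- nodup of the one-line word
  have hnodup : (oneLine n w).Nodup := by
    rw [oneLine_eq]
    refine List.Nodup.map_on ?_ (List.nodup_range' (s := 1) (n := n))
    intro p hp q hq hpq
    rw [List.mem_range'_1] at hp hq
    have hp' := hwrange (p : ℤ) (by exact_mod_cast hp.1) (by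
      have : p ≤ n := by omega
      exact_mod_cast this)
    have hq' := hwrange (q : ℤ) (by exact_mod_cast hq.1) (by
      have : q ≤ n := by omega
      exact_mod_cast this)
    have h1 : w (p : ℤ) = w (q : ℤ) := by
      have e1 : ((w (p : ℤ)).toNat : ℤ) = w (p : ℤ) := Int.toNat_of_nonneg (by omega)
      have e2 : ((w (q : ℤ)).toNat : ℤ) = w (q : ℤ) := Int.toNat_of_nonneg (by omega)
      rw [← e1, ← e2]; exact_mod_cast hpq
    have := w.injective h1
    exact_mod_cast this
  rw [hone] at hnodup
  have hPlnd : Pl.Nodup := hnodup.of_append_left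
  have hdis := List.disjoint_of_nodup_append hnodup
  obtain ⟨hrowsTP, hpermTP⟩ := foldl_inv Pl [] (by simp) (by simpa using hPlnd)
  set TP : List (List ℕ) := Pl.foldl insertTab [] with hTP
  have hpermTP' : TP.flatten.Perm Pl := by simpa using hpermTP
  have hTPnd : TP.flatten.Nodup := hpermTP'.nodup_iff.mpr hPlnd
  have hmemTP : ∀ a : ℕ, a ∈ TP.flatten → a ∈ Pl := fun a ha => hpermTP'.subset ha
  have hna : (w (j : ℤ)).toNat ∉ TP.flatten := fun h => hdis (hmemTP _ h) (by simp)
  have hnb : (w ((j : ℤ) + 1)).toNat ∉ TP.flatten := fun h => hdis (hmemTP _ h) (by simp)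
  have hnc : (w ((j : ℤ) + 2)).toNat ∉ TP.flatten := fun h => hdis (hmemTP _ h) (by simp)
  rw [hone, hone']
  simp only [Ptab, List.foldl_append, List.foldl_cons, List.foldl_nil, ← hTP]
  rcases hbetween with ⟨h1, h2⟩ | ⟨h1, h2⟩
  · have hac : (w (j : ℤ)).toNat < (w ((j : ℤ) + 2)).toNat :=
      (Int.toNat_lt_toNat (by omega)).mpr h1
    have hcb : (w ((j : ℤ) + 2)).toNat < (w ((j : ℤ) + 1)).toNat :=
      (Int.toNat_lt_toNat (by omega)).mpr h2
    have hkey := (key TP.length TP le_rfl hrowsTP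
      (w (j : ℤ)).toNat (w ((j : ℤ) + 1)).toNat (w ((j : ℤ) + 2)).toNat
      (nodup3 hTPnd hna hnb hnc (by omega) (by omega) (by omega))).1 hac hcb
    simp only [I3] at hkey
    rw [hkey]
  · have hbc : (w ((j : ℤ) + 1)).toNat < (w ((j : ℤ) + 2)).toNat :=
      (Int.toNat_lt_toNat (by omega)).mpr h1
    have hca : (w ((j : ℤ) + 2)).toNat < (w (j : ℤ)).toNat :=
      (Int.toNat_lt_toNat (by omega)).mpr h2
    have hkey := (key TP.length TP le_rfl hrowsTP
      (w ((j : ℤ) + 1)).toNat (w (j : ℤ)).toNat (w ((j : ℤ) + 2)).toNat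
      (nodup3 hTPnd hnb hna hnc (by omega) (by omega) (by omega))).1 hbc hca
    simp only [I3] at hkey
    rw [hkey]
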